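/- Let d ≥ 1, let H be a symmetric positive definite d×d real matrix with μ·I ⪯ H ⪯ L·I for some 0 < μ ≤ L, and let g ∈ ℝ^d be nonzero. Then (1/2^d)·Σ_{u ∈ {−1,1}^d} (uᵀg)² / ((uᵀHu)·(gᵀH⁻¹g)) ≥ μ/(dL). In particular, (1/2^d)·Σ_{u ∈ {−1,1}^d} (uᵀg)² = ‖g‖². -/

import Mathlib

open Matrix

/-- The hypercube vertex in `{−1,1}^d` associated with a sign pattern `s : Fin d → Bool`. -/
def pmVec (d : ℕ) (s : Fin d → Bool) : Fin d → ℝ := fun i => if s i then 1 else -1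

lemma pmVec_sq (d : ℕ) (s : Fin d → Bool) (i : Fin d) : pmVec d s i * pmVec d s i = 1 := by
  unfold pmVec; by_cases h : s i <;> simp [h]

lemma pmVec_cross (d : ℕ) {i j : Fin d} (hij : i ≠ j) :
    ∑ s : Fin d → Bool, pmVec d s i * pmVec d s j = 0 := by
  have hinv : Function.Involutive (fun s : Fin d → Bool => Function.update s j (! s j)) := by
    intro s
    funext k
    by_cases h : k = j
    · subst h; simp
    · simp [Function.update_of_ne h]
  have hcomp := Equiv.sum_comp hinv.toPerm
    (fun s : Fin d → Bool => pmVec d s i * pmVec d s j)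
  have hneg : ∀ s : Fin d → Bool,
      pmVec d (Function.update s j (! s j)) i * pmVec d (Function.update s j (! s j)) j
      = -(pmVec d s i * pmVec d s j) := by
    intro s
    have hsi : Function.update s j (! s j) i = s i := Function.update_of_ne hij _ s
    have hsj : Function.update s j (! s j) j = ! s j := Function.update_self _ _ _
    unfold pmVec
    rw [hsi, hsj]
    by_cases h : s i <;> by_cases h' : s j <;> simp [h, h']
  have : ∑ s : Fin d → Bool, pmVec d s i * pmVec d s j
      = -∑ s : Fin d → Bool, pmVec d s i * pmVec d s j := by
    conv_lhs => rw [← hcomp]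
    simp only [Function.Involutive.toPerm, Equiv.coe_fn_mk]
    rw [← Finset.sum_neg_distrib]
    exact Finset.sum_congr rfl (fun s _ => hneg s)
  linarith

lemma pmVec_second_moment (d : ℕ) (g : Fin d → ℝ) :
    ∑ s : Fin d → Bool, (pmVec d s ⬝ᵥ g) ^ 2 = 2 ^ d * (g ⬝ᵥ g) := by
  have key : ∀ s : Fin d → Bool, (pmVec d s ⬝ᵥ g) ^ 2 =
      ∑ i : Fin d, ∑ j : Fin d, (pmVec d s i * pmVec d s j) * (g i * g j) := by
    intro s
    simp only [dotProduct, sq, Finset.sum_mul_sum]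
    congr 1; funext i; congr 1; funext j; ring
  simp only [key]
  rw [Finset.sum_comm]
  have : ∀ i : Fin d, ∑ s : Fin d → Bool, ∑ j : Fin d,
      (pmVec d s i * pmVec d s j) * (g i * g j) = 2 ^ d * (g i * g i) := by
    intro i
    rw [Finset.sum_comm]
    have hterm : ∀ j : Fin d, ∑ s : Fin d → Bool,
        (pmVec d s i * pmVec d s j) * (g i * g j)
        = (if i = j then (2:ℝ) ^ d * (g i * g i) else 0) := by
      intro j
      rw [← Finset.sum_mul]
      by_cases h : i = j
      · subst h
        simp only [if_pos rfl]
        rw [Finset.sum_congr rfl (fun s _ => pmVec_sq d s i)]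
        simp [Finset.card_univ]
      · rw [pmVec_cross d h]; simp [h]
    rw [Finset.sum_congr rfl (fun j _ => hterm j)]
    simp
  rw [Finset.sum_congr rfl (fun i _ => this i), ← Finset.mul_sum]
  simp [dotProduct]

theorem eta_rademacher_lower_bound (d : ℕ) (hd : 0 < d)
    (H : Matrix (Fin d) (Fin d) ℝ) (hH : H.PosDef)
    (μ L : ℝ) (hμ : 0 < μ) (hμL : μ ≤ L)
    (hlow : ∀ u : Fin d → ℝ, μ * (u ⬝ᵥ u) ≤ u ⬝ᵥ (H *ᵥ u))
    (hup : ∀ u : Fin d → ℝ, u ⬝ᵥ (H *ᵥ u) ≤ L * (u ⬝ᵥ u))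
    (g : Fin d → ℝ) (hg : g ≠ 0) :
    (μ / (d * L) ≤ (1 / 2 ^ d) * ∑ s : Fin d → Bool,
      (pmVec d s ⬝ᵥ g) ^ 2 /
        ((pmVec d s ⬝ᵥ (H *ᵥ pmVec d s)) * (g ⬝ᵥ (H⁻¹ *ᵥ g)))) ∧
    (1 / 2 ^ d : ℝ) * ∑ s : Fin d → Bool, (pmVec d s ⬝ᵥ g) ^ 2 = g ⬝ᵥ g := by
  have hL : (0:ℝ) < L := lt_of_lt_of_le hμ hμL
  have hd' : (0:ℝ) < (d:ℝ) := by exact_mod_cast hd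
  have hgg : 0 < g ⬝ᵥ g := by
    have := hH.dotProduct_mulVec_pos hg
    have h2 := hlow g
    have h3 : 0 < g ⬝ᵥ (H *ᵥ g) := by simpa using this
    nlinarith [hup g]
  -- second moment
  have hmom := pmVec_second_moment d g
  have hsecond : (1 / 2 ^ d : ℝ) * ∑ s : Fin d → Bool, (pmVec d s ⬝ᵥ g) ^ 2 = g ⬝ᵥ g := by
    rw [hmom]; field_simp
  refine ⟨?_, hsecond⟩
  -- B bound
  set v : Fin d → ℝ := H⁻¹ *ᵥ g with hv
  have hHv : H *ᵥ v = g := by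
    rw [hv, Matrix.mulVec_mulVec, Matrix.mul_nonsing_inv _ (isUnit_iff_ne_zero.mpr hH.det_pos.ne'), Matrix.one_mulVec]
  set B : ℝ := g ⬝ᵥ v with hB
  have hBpos : 0 < B := by
    have := hH.inv.dotProduct_mulVec_pos hg
    simpa [hB, hv] using this
  have hvg : v ⬝ᵥ g = B := dotProduct_comm v g
  have hvHv : v ⬝ᵥ (H *ᵥ v) = B := by rw [hHv, hvg]
  have hvv : μ * (v ⬝ᵥ v) ≤ B := by rw [← hvHv]; exact hlow v
  have hCS : B ^ 2 ≤ (v ⬝ᵥ v) * (g ⬝ᵥ g) := by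
    have := Finset.sum_mul_sq_le_sq_mul_sq Finset.univ v g
    have hsq : ∀ (w : Fin d → ℝ), ∑ i, w i ^ 2 = w ⬝ᵥ w := by
      intro w; simp [dotProduct, sq]
    rw [hsq v, hsq g] at this
    calc B ^ 2 = (∑ i, v i * g i) ^ 2 := by rw [hvg.symm]; rfl
    _ ≤ (v ⬝ᵥ v) * (g ⬝ᵥ g) := this
  have hvvB : v ⬝ᵥ v ≤ B / μ := by
    rw [le_div_iff₀ hμ]; linarith [hvv]
  have hBle : B ≤ (g ⬝ᵥ g) / μ := by
    have h1 : B ^ 2 ≤ (B / μ) * (g ⬝ᵥ g) := le_trans hCS (by nlinarith [hgg])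
    rw [le_div_iff₀ hμ]
    nlinarith [hBpos]
  -- pmVec facts
  have hpm_ne : ∀ s : Fin d → Bool, pmVec d s ≠ 0 := by
    intro s hcon
    have := congrFun hcon ⟨0, hd⟩
    unfold pmVec at this
    by_cases h : s ⟨0, hd⟩ <;> simp [h] at this
  have hpm_norm : ∀ s : Fin d → Bool, pmVec d s ⬝ᵥ pmVec d s = d := by
    intro s
    simp only [dotProduct]
    rw [Finset.sum_congr rfl (fun i _ => pmVec_sq d s i)]
    simp
  have hApos : ∀ s : Fin d → Bool, 0 < pmVec d s ⬝ᵥ (H *ᵥ pmVec d s) := by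
    intro s
    have := hH.dotProduct_mulVec_pos (hpm_ne s)
    simpa using this
  have hAle : ∀ s : Fin d → Bool, pmVec d s ⬝ᵥ (H *ᵥ pmVec d s) ≤ L * d := by
    intro s
    have := hup (pmVec d s)
    rwa [hpm_norm s] at this
  -- termwise bound
  have hdenom_pos : (0:ℝ) < (L * d) * ((g ⬝ᵥ g) / μ) := by positivity
  have hterm : ∀ s : Fin d → Bool,
      (pmVec d s ⬝ᵥ g) ^ 2 / ((L * d) * ((g ⬝ᵥ g) / μ)) ≤
      (pmVec d s ⬝ᵥ g) ^ 2 / ((pmVec d s ⬝ᵥ (H *ᵥ pmVec d s)) * B) := by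
    intro s
    apply div_le_div_of_nonneg_left (by positivity) (mul_pos (hApos s) hBpos)
    exact mul_le_mul (hAle s) hBle (le_of_lt hBpos) (by positivity)
  have hsum : (∑ s : Fin d → Bool, (pmVec d s ⬝ᵥ g) ^ 2) / ((L * d) * ((g ⬝ᵥ g) / μ)) ≤
      ∑ s : Fin d → Bool, (pmVec d s ⬝ᵥ g) ^ 2 / ((pmVec d s ⬝ᵥ (H *ᵥ pmVec d s)) * B) := by
    rw [Finset.sum_div]
    exact Finset.sum_le_sum (fun s _ => hterm s)
  have hlhs : (∑ s : Fin d → Bool, (pmVec d s ⬝ᵥ g) ^ 2) / ((L * d) * ((g ⬝ᵥ g) / μ))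
      = 2 ^ d * (μ / (d * L)) := by
    rw [hmom]
    field_simp
  rw [hlhs] at hsum
  calc μ / (d * L) = (1 / 2 ^ d) * (2 ^ d * (μ / (d * L))) := by
        field_simp
    _ ≤ (1 / 2 ^ d) * ∑ s : Fin d → Bool, (pmVec d s ⬝ᵥ g) ^ 2 /
        ((pmVec d s ⬝ᵥ (H *ᵥ pmVec d s)) * (g ⬝ᵥ (H⁻¹ *ᵥ g))) := by
        apply mul_le_mul_of_nonneg_left _ (by positivity)
        exact hsum
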